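/- Along any solution (s(t), x(t), r(t)) of the network SIR system s' = -β diag(s)Ax, x' = β diag(s)Ax - γx, r' = γx, each function V_i(t) = s_i(t)·exp((β/γ)∑_j a_{ij} r_j(t)) is constant in t. -/

import Mathlib

/-- Along any solution (s, x, r) of the network SIR system
s' = -β diag(s)Ax, x' = β diag(s)Ax - γx, r' = γx, each function
V_i(t) = s_i(t)·exp((β/γ)∑_j a_{ij} r_j(t)) is constant in t. -/
theorem network_SIR_conserved_quantities
    {n : ℕ} (A : Matrix (Fin n) (Fin n) ℝ) (hA : ∀ i j, 0 ≤ A i j)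
    (β γ : ℝ) (hβ : 0 < β) (hγ : 0 < γ)
    (s x r : ℝ → Fin n → ℝ)
    (hsum : ∀ t i, s t i + x t i + r t i = 1)
    (hderivs : ∀ t : ℝ, ∀ i,
      HasDerivAt (fun u => s u i) (-(β * s t i * ∑ j, A i j * x t j)) t)
    (hderivx : ∀ t : ℝ, ∀ i,
      HasDerivAt (fun u => x u i)
        (β * s t i * (∑ j, A i j * x t j) - γ * x t i) t)
    (hderivr : ∀ t : ℝ, ∀ i, HasDerivAt (fun u => r u i) (γ * x t i) t) :
    ∀ i, ∀ t : ℝ,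
      s t i * Real.exp (β / γ * ∑ j, A i j * r t j)
        = s 0 i * Real.exp (β / γ * ∑ j, A i j * r 0 j) := by
  intro i t
  have key : ∀ u : ℝ, HasDerivAt
      (fun u => s u i * Real.exp (β / γ * ∑ j, A i j * r u j)) 0 u := by
    intro u
    have hsumder : HasDerivAt (fun v => ∑ j, A i j * r v j)
        (∑ j, A i j * (γ * x u j)) u := by
      apply HasDerivAt.fun_sum
      intro j _
      exact (hderivr u j).const_mul (A i j)
    have hexp : HasDerivAt (fun v => Real.exp (β / γ * ∑ j, A i j * r v j))
        (Real.exp (β / γ * ∑ j, A i j * r u j) *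
          (β / γ * ∑ j, A i j * (γ * x u j))) u := by
      exact (Real.hasDerivAt_exp _).comp u (hsumder.const_mul (β / γ))
    have h := (hderivs u i).mul hexp
    convert h using 1
    · rfl
    · rfl
    · rfl
    have hsum2 : (∑ j, A i j * (γ * x u j)) = γ * ∑ j, A i j * x u j := by
      rw [Finset.mul_sum]; congr 1; ext j; ring
    rw [hsum2]
    field_simp
    ring
  have hconst : ∀ a b : ℝ,
      s a i * Real.exp (β / γ * ∑ j, A i j * r a j)
        = s b i * Real.exp (β / γ * ∑ j, A i j * r b j) := by
    intro a b
    have : (fun u => s u i * Real.exp (β / γ * ∑ j, A i j * r u j)) a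
        = (fun u => s u i * Real.exp (β / γ * ∑ j, A i j * r u j)) b :=
      is_const_of_deriv_eq_zero (fun u => (key u).differentiableAt)
        (fun u => (key u).deriv) a b
    simpa using this
  exact hconst t 0
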